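/- Let step (a, b) = (Nat.xor a b, 2 * Nat.land a b) and let T(a, b) be the least k such that the second component of step^[k] (a, b) is zero. Then T(a, b) exists (the loop always terminates) and T(a, b) ≤ (number of bits of a + b) , i.e., T(a, b) ≤ Nat.size (a + b). -/

import Mathlib

def addStep (p : ℕ × ℕ) : ℕ × ℕ := (p.1 ^^^ p.2, 2 * (p.1 &&& p.2))

lemma xor_add_two_land (a b : ℕ) : (a ^^^ b) + 2 * (a &&& b) = a + b := by
  induction a using Nat.strong_induction_on generalizing b with
  | _ a ih =>
    rcases Nat.eq_zero_or_pos a with rfl | ha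
    · simp
    have ih' := ih (a / 2) (Nat.div_lt_self ha one_lt_two) (b / 2)
    have h1 : (a ^^^ b) / 2 = a / 2 ^^^ b / 2 := Nat.xor_div_two
    have h2 : (a &&& b) / 2 = a / 2 &&& b / 2 := Nat.and_div_two
    have h3 : (a ^^^ b) % 2 = (a + b) % 2 := Nat.xor_mod_two_eq
    have h4 : (a &&& b) % 2 = 1 ↔ a % 2 = 1 ∧ b % 2 = 1 := Nat.and_mod_two_eq_one
    have h5 := Nat.mod_lt (a &&& b) (by norm_num : (0:ℕ) < 2)
    have e1 := Nat.div_add_mod (a ^^^ b) 2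
    have e2 := Nat.div_add_mod (a &&& b) 2
    have e3 := Nat.div_add_mod a 2
    have e4 := Nat.div_add_mod b 2
    omega

lemma dvd_land_right (x m n : ℕ) (h : 2 ^ n ∣ m) : 2 ^ n ∣ (x &&& m) := by
  have hm : m % 2 ^ n = 0 := Nat.mod_eq_zero_of_dvd h
  rw [Nat.dvd_iff_mod_eq_zero, ← Nat.and_two_pow_sub_one_eq_mod, Nat.land_assoc,
    Nat.and_two_pow_sub_one_eq_mod, hm]
  simp

lemma snd_dvd (a b k : ℕ) : 2 ^ k ∣ (addStep^[k] (a, b)).2 := by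
  induction k generalizing a b with
  | zero => simp
  | succ n ih =>
    rw [Function.iterate_succ_apply']
    show 2 ^ (n + 1) ∣ 2 * (_ &&& _)
    rw [pow_succ, Nat.mul_comm (2^n) 2]
    exact Nat.mul_dvd_mul_left 2 (dvd_land_right _ _ _ (ih a b))

lemma sum_invariant (a b k : ℕ) :
    (addStep^[k] (a, b)).1 + (addStep^[k] (a, b)).2 = a + b := by
  induction k with
  | zero => rfl
  | succ n ih =>
    rw [Function.iterate_succ_apply']
    show (_ ^^^ _) + 2 * (_ &&& _) = a + b
    exact (xor_add_two_land _ _).trans ih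

theorem addStep_termination_bound (a b : ℕ) :
    ∃ hk : ∃ k, (addStep^[k] (a, b)).2 = 0, Nat.find hk ≤ Nat.size (a + b) := by
  set k := Nat.size (a + b) with hkdef
  have hzero : (addStep^[k] (a, b)).2 = 0 := by
    by_contra h
    have hd := snd_dvd a b k
    have hle : 2 ^ k ≤ (addStep^[k] (a, b)).2 :=
      Nat.le_of_dvd (Nat.pos_of_ne_zero h) hd
    have hsum := sum_invariant a b k
    have : a + b < 2 ^ k := Nat.lt_size_self (a + b)
    omega
  exact ⟨⟨k, hzero⟩, Nat.find_le hzero⟩
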